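/- Under the setting of Lemma 3.1 (y ∈ ℝ^d, Σ, S_t(θ) positive definite, likelihood p(y|θ) = f_N(y; η(θ), Σ) with η(θ) ~ N(μ_t(θ), S_t(θ))), suppose that conditioning additionally on a hypothetical observation (z*, η*) changes the emulator to η(θ) ~ N(μ_{t+1}(θ), S_t(θ) − Φ_t(θ,z*)), where given D_t the vector μ_{t+1}(θ) is distributed N(μ_t(θ), Φ_t(θ,z*)) and Φ_t(θ,z*) has entries cov_t(z_i^f, z*)cov_t(z_j^f, z*)/(ς_t²(z*)+υ). Then E_{η*|D_t}[ Var[p(y|θ) | (z*,η*) ∪ D_t] ] = (2^d π^{d/2}|Σ|^{1/2})^{-1} f_N(y; μ_t(θ), (1/2)Σ + S_t(θ)) − (2^d π^{d/2}|Σ + S_t(θ) − Φ_t(θ,z*)|^{1/2})^{-1} f_N(y; μ_t(θ), (1/2)(Σ + S_t(θ) + Φ_t(θ,z*))). -/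

import Mathlib

open Matrix MeasureTheory

/-- Multivariate normal density on ℝ^d: `fN d C b a` is the density with mean `b`
and covariance `C`, evaluated at `a`. -/
noncomputable def fN (d : ℕ) (C : Matrix (Fin d) (Fin d) ℝ) (b a : Fin d → ℝ) : ℝ :=
  (2 * Real.pi) ^ (-(d : ℝ) / 2) * C.det ^ (-(1 : ℝ) / 2) *
    Real.exp (-(1 / 2) * ((a - b) ⬝ᵥ (C⁻¹ *ᵥ (a - b))))

open Real

variable {d : ℕ}


lemma posdef_transpose {M : Matrix (Fin d) (Fin d) ℝ} (hM : M.PosDef) : Mᵀ = M := by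
  rw [← Matrix.conjTranspose_eq_transpose_of_trivial]; exact hM.isHermitian

lemma dot_symm {P : Matrix (Fin d) (Fin d) ℝ} (hP : Pᵀ = P) (a b : Fin d → ℝ) :
    (P *ᵥ a) ⬝ᵥ b = a ⬝ᵥ (P *ᵥ b) := by
  rw [Matrix.dotProduct_mulVec a P b, ← hP, Matrix.vecMul_transpose, hP]

lemma posSemidef_det_nonneg {A : Matrix (Fin d) (Fin d) ℝ} (hA : A.PosSemidef) :
    0 ≤ A.det := by
  rw [hA.isHermitian.det_eq_prod_eigenvalues]
  exact Finset.prod_nonneg fun i _ => hA.eigenvalues_nonneg i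

lemma sqrtinv_spec {M : Matrix (Fin d) (Fin d) ℝ} (hM : M.PosDef) :
    ∃ S : Matrix (Fin d) (Fin d) ℝ, Sᵀ = S ∧ S * S = M⁻¹ ∧ S.det = M.det ^ (-(1:ℝ)/2) := by
  open scoped MatrixOrder in
  have hN : (M⁻¹).PosDef := hM.inv
  open scoped MatrixOrder in
  have hS : (CFC.sqrt (M⁻¹)).PosSemidef := (CFC.sqrt_nonneg (M⁻¹)).posSemidef
  open scoped MatrixOrder in
  have hSS : CFC.sqrt (M⁻¹) * CFC.sqrt (M⁻¹) = M⁻¹ :=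
    CFC.sqrt_mul_sqrt_self _ hN.posSemidef.nonneg
  refine ⟨_, ?_, hSS, ?_⟩
  · rw [← Matrix.conjTranspose_eq_transpose_of_trivial]
    exact hS.isHermitian
  · have h1 : (CFC.sqrt (M⁻¹)).det ^ 2 = (M⁻¹).det := by
      rw [pow_two, ← Matrix.det_mul, hSS]
    have h2 : 0 ≤ (CFC.sqrt (M⁻¹)).det := posSemidef_det_nonneg hS
    have h3 : (M⁻¹).det = (M.det)⁻¹ := by rw [Matrix.det_nonsing_inv, Ring.inverse_eq_inv']
    have hd : 0 < M.det := hM.det_pos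
    have h4 : (M.det ^ (-(1:ℝ)/2))^2 = (M.det)⁻¹ := by
      rw [← Real.rpow_natCast (M.det ^ (-(1:ℝ)/2)) 2, ← Real.rpow_mul hd.le]
      norm_num [Real.rpow_neg_one]
    have h5 : 0 ≤ M.det ^ (-(1:ℝ)/2) := Real.rpow_nonneg hd.le _
    nlinarith [h1, h3, h4, sq_nonneg ((CFC.sqrt (M⁻¹)).det - M.det ^ (-(1:ℝ)/2)),
      sq_nonneg ((CFC.sqrt (M⁻¹)).det + M.det ^ (-(1:ℝ)/2))]

lemma mulVec_measurableEmbedding (M : Matrix (Fin d) (Fin d) ℝ) (hM : M.det ≠ 0) :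
    MeasurableEmbedding (fun x : Fin d → ℝ => M *ᵥ x) := by
  have hinv : Invertible M := M.invertibleOfIsUnitDet hM.isUnit
  let e := M.toLinearEquiv' hinv
  have : (fun x : Fin d → ℝ => M *ᵥ x) = ⇑(e.toContinuousLinearEquiv.toHomeomorph) := by
    ext x i
    rfl
  rw [this]
  exact (e.toContinuousLinearEquiv.toHomeomorph).measurableEmbedding

lemma map_mulVec_volume (M : Matrix (Fin d) (Fin d) ℝ) (hM : M.det ≠ 0) :
    Measure.map (fun x : Fin d → ℝ => M *ᵥ x) volume
      = ENNReal.ofReal |M.det|⁻¹ • volume := by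
  have h1 := Real.map_matrix_volume_pi_eq_smul_volume_pi hM
  rw [← abs_inv, ← h1]
  congr 1

lemma integral_comp_mulVec (M : Matrix (Fin d) (Fin d) ℝ) (hM : M.det ≠ 0)
    (f : (Fin d → ℝ) → ℝ) :
    ∫ x : Fin d → ℝ, f (M *ᵥ x) = |M.det|⁻¹ * ∫ x, f x := by
  have h2 := (mulVec_measurableEmbedding M hM).integral_map (μ := volume) (g := f)
  rw [← h2, map_mulVec_volume M hM, integral_smul_measure,
    ENNReal.toReal_ofReal (by positivity), smul_eq_mul]

lemma integrable_comp_mulVec (M : Matrix (Fin d) (Fin d) ℝ) (hM : M.det ≠ 0)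
    {f : (Fin d → ℝ) → ℝ} (hf : Integrable f) :
    Integrable (fun x : Fin d → ℝ => f (M *ᵥ x)) := by
  have h := ((mulVec_measurableEmbedding M hM).integrable_map_iff (μ := volume) (g := f))
  rw [map_mulVec_volume M hM] at h
  exact h.mp ((integrable_smul_measure (by simp [hM, abs_eq_zero]) (by simp)).mpr hf)


lemma iso_integrable (d : ℕ) :
    Integrable (fun x : Fin d → ℝ => Real.exp (-(1/2) * (x ⬝ᵥ x))) := by
  have h := EuclideanSpace.volume_preserving_symm_measurableEquiv_toLp (Fin d)
  rw [← MeasurePreserving.integrable_comp_emb h (MeasurableEquiv.measurableEmbedding _)]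
  have hi : Integrable (fun v : EuclideanSpace ℝ (Fin d) =>
      Complex.exp (-(1/2 : ℂ) * ‖v‖^2 + 0 * (inner ℝ (0 : EuclideanSpace ℝ (Fin d)) v : ℝ))) :=
    GaussianFourier.integrable_cexp_neg_mul_sq_norm_add (by norm_num) 0 0
  have := hi.norm
  apply this.congr
  filter_upwards with v
  simp only [Function.comp]
  rw [show ((MeasurableEquiv.toLp 2 (Fin d → ℝ)).symm v ⬝ᵥ (MeasurableEquiv.toLp 2 (Fin d → ℝ)).symm v) = ‖v‖^2 by
    rw [EuclideanSpace.norm_eq, Real.sq_sqrt (by positivity)]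
    simp [dotProduct, sq]]
  rw [Complex.norm_exp]
  norm_num
  rw [← Complex.ofReal_pow, Complex.ofReal_re]

lemma iso_integral (d : ℕ) :
    ∫ x : Fin d → ℝ, Real.exp (-(1/2) * (x ⬝ᵥ x)) = (2 * Real.pi) ^ ((d:ℝ)/2) := by
  have h := EuclideanSpace.volume_preserving_symm_measurableEquiv_toLp (Fin d)
  rw [← h.integral_comp (MeasurableEquiv.measurableEmbedding _)]
  have key : ∀ v : EuclideanSpace ℝ (Fin d),
      Real.exp (-(1/2) * ((MeasurableEquiv.toLp 2 (Fin d → ℝ)).symm v ⬝ᵥ (MeasurableEquiv.toLp 2 (Fin d → ℝ)).symm v))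
        = Real.exp (-(1/2 : ℝ) * ‖v‖^2) := by
    intro v
    congr 1
    rw [EuclideanSpace.norm_eq, Real.sq_sqrt (by positivity)]
    simp [dotProduct, sq]
  rw [MeasureTheory.integral_congr_ae (Filter.Eventually.of_forall key)]
  rw [GaussianFourier.integral_rexp_neg_mul_sq_norm (by norm_num : (0:ℝ) < 1/2)]
  simp only [finrank_euclideanSpace, Fintype.card_fin]
  rw [div_div_eq_mul_div, mul_comm]
  norm_num


lemma gauss_integral0 {M : Matrix (Fin d) (Fin d) ℝ} (hM : M.PosDef) :
    ∫ x : Fin d → ℝ, Real.exp (-(1/2) * (x ⬝ᵥ (M⁻¹ *ᵥ x)))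
      = (2 * Real.pi) ^ ((d:ℝ)/2) * M.det ^ ((1:ℝ)/2) := by
  obtain ⟨S, hSsym, hSS, hSdet⟩ := sqrtinv_spec hM
  have hd : 0 < M.det := hM.det_pos
  have hdS : 0 < S.det := by rw [hSdet]; positivity
  have hdSi : S⁻¹.det ≠ 0 := by
    rw [Matrix.det_nonsing_inv, Ring.inverse_eq_inv']
    positivity
  have hSinvsym : (S⁻¹)ᵀ = S⁻¹ := by rw [Matrix.transpose_nonsing_inv, hSsym]
  have key : ∀ x : Fin d → ℝ,
      Real.exp (-(1/2) * ((S⁻¹ *ᵥ x) ⬝ᵥ (M⁻¹ *ᵥ (S⁻¹ *ᵥ x)))) = Real.exp (-(1/2) * (x ⬝ᵥ x)) := by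
    intro x
    congr 2
    rw [← hSS, Matrix.mulVec_mulVec, Matrix.mul_assoc, Matrix.mul_nonsing_inv _ hdS.ne'.isUnit,
      Matrix.mul_one, dot_symm hSinvsym, Matrix.mulVec_mulVec, Matrix.nonsing_inv_mul _ hdS.ne'.isUnit,
      Matrix.one_mulVec]
  have h := integral_comp_mulVec S⁻¹ hdSi (fun y => Real.exp (-(1/2) * (y ⬝ᵥ (M⁻¹ *ᵥ y))))
  simp only [key] at h
  rw [iso_integral d] at h
  have habs : |S⁻¹.det|⁻¹ = M.det ^ (-(1:ℝ)/2) := by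
    rw [Matrix.det_nonsing_inv, Ring.inverse_eq_inv', abs_inv, inv_inv, abs_of_pos hdS, hSdet]
  rw [habs] at h
  rw [h, mul_comm (M.det ^ (-(1:ℝ)/2)) _, mul_assoc, ← Real.rpow_add hd]
  norm_num

lemma gauss_integral {M : Matrix (Fin d) (Fin d) ℝ} (hM : M.PosDef) (c : Fin d → ℝ) :
    ∫ x : Fin d → ℝ, Real.exp (-(1/2) * ((x - c) ⬝ᵥ (M⁻¹ *ᵥ (x - c))))
      = (2 * Real.pi) ^ ((d:ℝ)/2) * M.det ^ ((1:ℝ)/2) := by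
  rw [MeasureTheory.integral_sub_right_eq_self
    (fun x : Fin d → ℝ => Real.exp (-(1/2) * (x ⬝ᵥ (M⁻¹ *ᵥ x)))) c]
  exact gauss_integral0 hM

lemma gauss_integrable {M : Matrix (Fin d) (Fin d) ℝ} (hM : M.PosDef) (c : Fin d → ℝ) :
    Integrable (fun x : Fin d → ℝ => Real.exp (-(1/2) * ((x - c) ⬝ᵥ (M⁻¹ *ᵥ (x - c))))) := by
  obtain ⟨S, hSsym, hSS, hSdet⟩ := sqrtinv_spec hM
  have hd : 0 < M.det := hM.det_pos
  have hdS : 0 < S.det := by rw [hSdet]; positivity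
  have base : Integrable (fun x : Fin d → ℝ => Real.exp (-(1/2) * (x ⬝ᵥ (M⁻¹ *ᵥ x)))) := by
    have h := integrable_comp_mulVec S hdS.ne' (iso_integrable d)
    apply h.congr
    filter_upwards with x
    congr 2
    rw [← hSS, ← Matrix.mulVec_mulVec, dot_symm hSsym]
  exact base.comp_sub_right c

variable {d : ℕ}

lemma dot_swap {P : Matrix (Fin d) (Fin d) ℝ} (hP : Pᵀ = P) (a b : Fin d → ℝ) :
    a ⬝ᵥ (P *ᵥ b) = b ⬝ᵥ (P *ᵥ a) := by
  rw [← dot_symm hP b a, dotProduct_comm]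

lemma quad_expand {P : Matrix (Fin d) (Fin d) ℝ} (hP : Pᵀ = P) (u v : Fin d → ℝ) :
    (u - v) ⬝ᵥ (P *ᵥ (u - v))
      = u ⬝ᵥ (P *ᵥ u) - 2 * (u ⬝ᵥ (P *ᵥ v)) + v ⬝ᵥ (P *ᵥ v) := by
  rw [Matrix.mulVec_sub, dotProduct_sub, sub_dotProduct,
    sub_dotProduct, dot_swap hP v u]
  ring

section CS
variable {A B : Matrix (Fin d) (Fin d) ℝ}

lemma sum_inv_fact1 (hA : A.PosDef) (hB : B.PosDef) :
    A⁻¹ + B⁻¹ = A⁻¹ * (A + B) * B⁻¹ := by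
  rw [Matrix.mul_add, Matrix.add_mul, Matrix.nonsing_inv_mul _ hA.det_pos.ne'.isUnit,
    Matrix.mul_assoc, Matrix.mul_nonsing_inv _ hB.det_pos.ne'.isUnit, Matrix.one_mul,
    Matrix.mul_one, add_comm]

lemma C_eq1 (hA : A.PosDef) (hB : B.PosDef) :
    (A⁻¹ + B⁻¹)⁻¹ = B * (A + B)⁻¹ * A := by
  rw [sum_inv_fact1 hA hB, Matrix.mul_inv_rev, Matrix.mul_inv_rev,
    Matrix.nonsing_inv_nonsing_inv _ hA.det_pos.ne'.isUnit,
    Matrix.nonsing_inv_nonsing_inv _ hB.det_pos.ne'.isUnit, Matrix.mul_assoc]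

lemma C_eq2 (hA : A.PosDef) (hB : B.PosDef) :
    (A⁻¹ + B⁻¹)⁻¹ = A * (B + A)⁻¹ * B := by
  rw [add_comm (A⁻¹), C_eq1 hB hA]

lemma I2 (hA : A.PosDef) (hB : B.PosDef) :
    A⁻¹ * (A⁻¹ + B⁻¹)⁻¹ * B⁻¹ = (A + B)⁻¹ := by
  rw [C_eq2 hA hB, ← Matrix.mul_assoc, ← Matrix.mul_assoc,
    Matrix.nonsing_inv_mul _ hA.det_pos.ne'.isUnit, Matrix.one_mul, Matrix.mul_assoc,
    Matrix.mul_nonsing_inv _ hB.det_pos.ne'.isUnit, Matrix.mul_one, add_comm B A]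

lemma I3 (hA : A.PosDef) (hB : B.PosDef) :
    B⁻¹ * (A⁻¹ + B⁻¹)⁻¹ * A⁻¹ = (A + B)⁻¹ := by
  rw [C_eq1 hA hB, ← Matrix.mul_assoc, ← Matrix.mul_assoc,
    Matrix.nonsing_inv_mul _ hB.det_pos.ne'.isUnit, Matrix.one_mul, Matrix.mul_assoc,
    Matrix.mul_nonsing_inv _ hA.det_pos.ne'.isUnit, Matrix.mul_one]

lemma I1 (hA : A.PosDef) (hB : B.PosDef) :
    A⁻¹ * (A⁻¹ + B⁻¹)⁻¹ * A⁻¹ = A⁻¹ - (A + B)⁻¹ := by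
  have hAB : (A + B).PosDef := hA.add hB
  have step : A⁻¹ * (A⁻¹ + B⁻¹)⁻¹ * A⁻¹ = (A + B)⁻¹ * B * A⁻¹ := by
    rw [C_eq2 hA hB, ← Matrix.mul_assoc, ← Matrix.mul_assoc,
      Matrix.nonsing_inv_mul _ hA.det_pos.ne'.isUnit, Matrix.one_mul, add_comm B A]
  rw [step]
  have e : (A + B) * (A⁻¹ - (A + B)⁻¹) = B * A⁻¹ := by
    rw [Matrix.mul_sub, Matrix.mul_nonsing_inv _ hAB.det_pos.ne'.isUnit, Matrix.add_mul,
      Matrix.mul_nonsing_inv _ hA.det_pos.ne'.isUnit]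
    abel
  calc (A + B)⁻¹ * B * A⁻¹ = (A + B)⁻¹ * ((A + B) * (A⁻¹ - (A + B)⁻¹)) := by
        rw [e, Matrix.mul_assoc]
    _ = A⁻¹ - (A + B)⁻¹ := by
        rw [← Matrix.mul_assoc, Matrix.nonsing_inv_mul _ hAB.det_pos.ne'.isUnit, Matrix.one_mul]

lemma I4 (hA : A.PosDef) (hB : B.PosDef) :
    B⁻¹ * (A⁻¹ + B⁻¹)⁻¹ * B⁻¹ = B⁻¹ - (A + B)⁻¹ := by
  have := I1 hB hA
  rw [add_comm (B⁻¹), add_comm B A] at this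
  exact this

lemma C_det (hA : A.PosDef) (hB : B.PosDef) :
    (A⁻¹ + B⁻¹)⁻¹.det = A.det * B.det / (A + B).det := by
  rw [C_eq2 hA hB, Matrix.det_mul, Matrix.det_mul, Matrix.det_nonsing_inv,
    Ring.inverse_eq_inv', add_comm B A]
  ring

end CS

lemma complete_square {A B : Matrix (Fin d) (Fin d) ℝ} (hA : A.PosDef) (hB : B.PosDef)
    (y μ m : Fin d → ℝ) :
    (y - m) ⬝ᵥ (A⁻¹ *ᵥ (y - m)) + (m - μ) ⬝ᵥ (B⁻¹ *ᵥ (m - μ))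
      = (m - (A⁻¹ + B⁻¹)⁻¹ *ᵥ (A⁻¹ *ᵥ y + B⁻¹ *ᵥ μ)) ⬝ᵥ
          ((A⁻¹ + B⁻¹) *ᵥ (m - (A⁻¹ + B⁻¹)⁻¹ *ᵥ (A⁻¹ *ᵥ y + B⁻¹ *ᵥ μ)))
        + (y - μ) ⬝ᵥ ((A + B)⁻¹ *ᵥ (y - μ)) := by
  have hiA : (A⁻¹)ᵀ = A⁻¹ := posdef_transpose hA.inv
  have hiB : (B⁻¹)ᵀ = B⁻¹ := posdef_transpose hB.inv
  have hAB : (A + B).PosDef := hA.add hB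
  have hG : ((A + B)⁻¹)ᵀ = (A + B)⁻¹ := posdef_transpose hAB.inv
  have hsum : (A⁻¹ + B⁻¹).PosDef := hA.inv.add hB.inv
  have hP : (A⁻¹ + B⁻¹)ᵀ = A⁻¹ + B⁻¹ := posdef_transpose hsum
  have hC : ((A⁻¹ + B⁻¹)⁻¹)ᵀ = (A⁻¹ + B⁻¹)⁻¹ := posdef_transpose hsum.inv
  set w : Fin d → ℝ := A⁻¹ *ᵥ y + B⁻¹ *ᵥ μ with hw
  set c : Fin d → ℝ := (A⁻¹ + B⁻¹)⁻¹ *ᵥ w with hc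
  have hPc : (A⁻¹ + B⁻¹) *ᵥ c = w := by
    rw [hc, Matrix.mulVec_mulVec, Matrix.mul_nonsing_inv _ hsum.det_pos.ne'.isUnit,
      Matrix.one_mulVec]
  have hmc : m ⬝ᵥ ((A⁻¹ + B⁻¹) *ᵥ c) = y ⬝ᵥ (A⁻¹ *ᵥ m) + μ ⬝ᵥ (B⁻¹ *ᵥ m) := by
    rw [hPc, hw, dotProduct_add, dot_swap hiA, dot_swap hiB]
  have tri : ∀ (P Q : Matrix (Fin d) (Fin d) ℝ) (u v : Fin d → ℝ),
      (P *ᵥ u) ⬝ᵥ ((A⁻¹ + B⁻¹)⁻¹ *ᵥ (Q *ᵥ v)) = u ⬝ᵥ ((Pᵀ * (A⁻¹ + B⁻¹)⁻¹ * Q) *ᵥ v) := by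
    intro P Q u v
    rw [Matrix.mulVec_mulVec, Matrix.dotProduct_mulVec, Matrix.vecMul_mulVec,
      ← Matrix.dotProduct_mulVec, ← Matrix.mul_assoc]
  have hcc : c ⬝ᵥ ((A⁻¹ + B⁻¹) *ᵥ c)
      = y ⬝ᵥ (A⁻¹ *ᵥ y) - y ⬝ᵥ ((A + B)⁻¹ *ᵥ y) + 2 * (y ⬝ᵥ ((A + B)⁻¹ *ᵥ μ))
        + (μ ⬝ᵥ (B⁻¹ *ᵥ μ) - μ ⬝ᵥ ((A + B)⁻¹ *ᵥ μ)) := by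
    rw [hPc, hc, dot_symm hC w w, hw, Matrix.mulVec_add, dotProduct_add,
      add_dotProduct, add_dotProduct]
    rw [tri A⁻¹ A⁻¹ y y, tri A⁻¹ B⁻¹ y μ, tri B⁻¹ A⁻¹ μ y, tri B⁻¹ B⁻¹ μ μ]
    rw [hiA, hiB, I1 hA hB, I2 hA hB, I3 hA hB, I4 hA hB]
    rw [Matrix.sub_mulVec, dotProduct_sub, Matrix.sub_mulVec, dotProduct_sub,
      dot_swap hG μ y]
    ring
  rw [quad_expand hiA y m, quad_expand hiB m μ, quad_expand hP m c, quad_expand hG y μ,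
    hmc, hcc, dot_swap hiB m μ]
  have h1 : m ⬝ᵥ ((A⁻¹ + B⁻¹) *ᵥ m) = m ⬝ᵥ (A⁻¹ *ᵥ m) + m ⬝ᵥ (B⁻¹ *ᵥ m) := by
    rw [Matrix.add_mulVec, dotProduct_add]
  rw [h1]
  ring

section conv
variable {A B : Matrix (Fin d) (Fin d) ℝ}

lemma key_ptwise (hA : A.PosDef) (hB : B.PosDef) (y μ : Fin d → ℝ) (m : Fin d → ℝ) :
    fN d A m y * fN d B μ m
      = ((2 * Real.pi) ^ (-(d:ℝ)/2) * A.det ^ (-(1:ℝ)/2)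
          * ((2 * Real.pi) ^ (-(d:ℝ)/2) * B.det ^ (-(1:ℝ)/2))
          * Real.exp (-(1/2) * ((y - μ) ⬝ᵥ ((A + B)⁻¹ *ᵥ (y - μ)))))
        * Real.exp (-(1/2) * ((m - (A⁻¹ + B⁻¹)⁻¹ *ᵥ (A⁻¹ *ᵥ y + B⁻¹ *ᵥ μ)) ⬝ᵥ
            ((((A⁻¹ + B⁻¹)⁻¹)⁻¹) *ᵥ (m - (A⁻¹ + B⁻¹)⁻¹ *ᵥ (A⁻¹ *ᵥ y + B⁻¹ *ᵥ μ))))) := by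
  have hsum : (A⁻¹ + B⁻¹).PosDef := hA.inv.add hB.inv
  have hCinv : ((A⁻¹ + B⁻¹)⁻¹)⁻¹ = A⁻¹ + B⁻¹ :=
    Matrix.nonsing_inv_nonsing_inv _ hsum.det_pos.ne'.isUnit
  have hexp : Real.exp (-(1/2) * ((y - m) ⬝ᵥ (A⁻¹ *ᵥ (y - m))))
        * Real.exp (-(1/2) * ((m - μ) ⬝ᵥ (B⁻¹ *ᵥ (m - μ))))
      = Real.exp (-(1/2) * ((y - μ) ⬝ᵥ ((A + B)⁻¹ *ᵥ (y - μ))))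
        * Real.exp (-(1/2) * ((m - (A⁻¹ + B⁻¹)⁻¹ *ᵥ (A⁻¹ *ᵥ y + B⁻¹ *ᵥ μ)) ⬝ᵥ
            ((A⁻¹ + B⁻¹) *ᵥ (m - (A⁻¹ + B⁻¹)⁻¹ *ᵥ (A⁻¹ *ᵥ y + B⁻¹ *ᵥ μ))))) := by
    rw [← Real.exp_add, ← Real.exp_add]
    congr 1
    linear_combination (-(1/2 : ℝ)) * (complete_square hA hB y μ m)
  simp only [fN, hCinv]
  calc ((2 * Real.pi) ^ (-(d:ℝ)/2) * A.det ^ (-(1:ℝ)/2)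
        * Real.exp (-(1/2) * ((y - m) ⬝ᵥ (A⁻¹ *ᵥ (y - m)))))
      * ((2 * Real.pi) ^ (-(d:ℝ)/2) * B.det ^ (-(1:ℝ)/2)
        * Real.exp (-(1/2) * ((m - μ) ⬝ᵥ (B⁻¹ *ᵥ (m - μ)))))
      = ((2 * Real.pi) ^ (-(d:ℝ)/2) * A.det ^ (-(1:ℝ)/2)
          * ((2 * Real.pi) ^ (-(d:ℝ)/2) * B.det ^ (-(1:ℝ)/2)))
        * (Real.exp (-(1/2) * ((y - m) ⬝ᵥ (A⁻¹ *ᵥ (y - m))))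
          * Real.exp (-(1/2) * ((m - μ) ⬝ᵥ (B⁻¹ *ᵥ (m - μ))))) := by ring
    _ = _ := by rw [hexp]; ring

lemma fN_conv_integrable (hA : A.PosDef) (hB : B.PosDef) (y μ : Fin d → ℝ) :
    Integrable (fun m : Fin d → ℝ => fN d A m y * fN d B μ m) := by
  have hsum : (A⁻¹ + B⁻¹).PosDef := hA.inv.add hB.inv
  have h := (gauss_integrable hsum.inv ((A⁻¹ + B⁻¹)⁻¹ *ᵥ (A⁻¹ *ᵥ y + B⁻¹ *ᵥ μ))).const_mul
    ((2 * Real.pi) ^ (-(d:ℝ)/2) * A.det ^ (-(1:ℝ)/2)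
      * ((2 * Real.pi) ^ (-(d:ℝ)/2) * B.det ^ (-(1:ℝ)/2))
      * Real.exp (-(1/2) * ((y - μ) ⬝ᵥ ((A + B)⁻¹ *ᵥ (y - μ)))))
  apply h.congr
  filter_upwards with m
  exact (key_ptwise hA hB y μ m).symm

lemma fN_conv (hA : A.PosDef) (hB : B.PosDef) (y μ : Fin d → ℝ) :
    ∫ m : Fin d → ℝ, fN d A m y * fN d B μ m = fN d (A + B) μ y := by
  have hAB : (A + B).PosDef := hA.add hB
  have hsum : (A⁻¹ + B⁻¹).PosDef := hA.inv.add hB.inv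
  have hInt : ∫ m : Fin d → ℝ, fN d A m y * fN d B μ m
      = ((2 * Real.pi) ^ (-(d:ℝ)/2) * A.det ^ (-(1:ℝ)/2)
          * ((2 * Real.pi) ^ (-(d:ℝ)/2) * B.det ^ (-(1:ℝ)/2))
          * Real.exp (-(1/2) * ((y - μ) ⬝ᵥ ((A + B)⁻¹ *ᵥ (y - μ)))))
        * ((2 * Real.pi) ^ ((d:ℝ)/2) * ((A⁻¹ + B⁻¹)⁻¹).det ^ ((1:ℝ)/2)) := by
    rw [MeasureTheory.integral_congr_ae
      (Filter.Eventually.of_forall (key_ptwise hA hB y μ))]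
    rw [MeasureTheory.integral_const_mul]
    rw [gauss_integral hsum.inv ((A⁻¹ + B⁻¹)⁻¹ *ᵥ (A⁻¹ *ᵥ y + B⁻¹ *ᵥ μ))]
  rw [hInt, C_det hA hB]
  simp only [fN]
  have ha := hA.det_pos
  have hb := hB.det_pos
  have hs := hAB.det_pos
  have hp : (0:ℝ) < 2 * Real.pi := by positivity
  have hdiv : (A.det * B.det / (A + B).det) ^ ((1:ℝ)/2)
      = A.det ^ ((1:ℝ)/2) * B.det ^ ((1:ℝ)/2) * ((A + B).det ^ ((1:ℝ)/2))⁻¹ := by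
    rw [Real.div_rpow (by positivity) hs.le, Real.mul_rpow ha.le hb.le, div_eq_mul_inv]
  have ea : A.det ^ (-(1:ℝ)/2) * A.det ^ ((1:ℝ)/2) = 1 := by
    rw [← Real.rpow_add ha]; norm_num
  have eb : B.det ^ (-(1:ℝ)/2) * B.det ^ ((1:ℝ)/2) = 1 := by
    rw [← Real.rpow_add hb]; norm_num
  have ep : (2 * Real.pi) ^ (-(d:ℝ)/2) * (2 * Real.pi) ^ ((d:ℝ)/2) = 1 := by
    rw [← Real.rpow_add hp, neg_div, neg_add_cancel, Real.rpow_zero]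
  have es : (A + B).det ^ (-(1:ℝ)/2) = ((A + B).det ^ ((1:ℝ)/2))⁻¹ := by
    rw [show (-(1:ℝ)/2) = -((1:ℝ)/2) by norm_num, Real.rpow_neg hs.le]
  rw [hdiv, es]
  calc (2 * Real.pi) ^ (-(d:ℝ)/2) * A.det ^ (-(1:ℝ)/2)
        * ((2 * Real.pi) ^ (-(d:ℝ)/2) * B.det ^ (-(1:ℝ)/2))
        * Real.exp (-(1/2) * ((y - μ) ⬝ᵥ ((A + B)⁻¹ *ᵥ (y - μ))))
        * ((2 * Real.pi) ^ ((d:ℝ)/2)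
          * (A.det ^ ((1:ℝ)/2) * B.det ^ ((1:ℝ)/2) * ((A + B).det ^ ((1:ℝ)/2))⁻¹))
      = (A.det ^ (-(1:ℝ)/2) * A.det ^ ((1:ℝ)/2)) * (B.det ^ (-(1:ℝ)/2) * B.det ^ ((1:ℝ)/2))
        * ((2 * Real.pi) ^ (-(d:ℝ)/2) * (2 * Real.pi) ^ ((d:ℝ)/2))
        * ((2 * Real.pi) ^ (-(d:ℝ)/2) * ((A + B).det ^ ((1:ℝ)/2))⁻¹
          * Real.exp (-(1/2) * ((y - μ) ⬝ᵥ ((A + B)⁻¹ *ᵥ (y - μ))))) := by ring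
    _ = _ := by rw [ea, eb, ep]; ring

end conv

lemma posdef_smul {M : Matrix (Fin d) (Fin d) ℝ} (hM : M.PosDef) {c : ℝ} (hc : 0 < c) :
    (c • M).PosDef := by
  refine ⟨?_, fun x hx => ?_⟩
  · rw [Matrix.IsHermitian, Matrix.conjTranspose_smul, hM.isHermitian]
    congr 1
  · exact (hM.smul hc).2 hx

lemma smul_half_inv {M : Matrix (Fin d) (Fin d) ℝ} (hM : M.PosDef) :
    ((1/2 : ℝ) • M)⁻¹ = (2 : ℝ) • M⁻¹ := by
  apply Matrix.inv_eq_right_inv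
  rw [Matrix.smul_mul, Matrix.mul_smul, smul_smul, Matrix.mul_nonsing_inv _ hM.det_pos.ne'.isUnit]
  norm_num

lemma fN_sq {M : Matrix (Fin d) (Fin d) ℝ} (hM : M.PosDef) (b a : Fin d → ℝ) :
    (fN d M b a) ^ 2
      = ((2 : ℝ) ^ d * Real.pi ^ ((d : ℝ) / 2) * M.det ^ ((1 : ℝ) / 2))⁻¹
        * fN d ((1/2 : ℝ) • M) b a := by
  have hD := hM.det_pos
  have hπ := Real.pi_pos
  have h2 : (0:ℝ) < 2 := two_pos
  have hq : (a - b) ⬝ᵥ (((1/2 : ℝ) • M)⁻¹ *ᵥ (a - b))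
      = 2 * ((a - b) ⬝ᵥ (M⁻¹ *ᵥ (a - b))) := by
    rw [smul_half_inv hM, Matrix.smul_mulVec, dotProduct_smul, smul_eq_mul]
  have hdet : ((1/2 : ℝ) • M).det = (1/2 : ℝ) ^ d * M.det := by
    rw [Matrix.det_smul]; simp
  have hexp : Real.exp (-(1/2) * ((a - b) ⬝ᵥ (M⁻¹ *ᵥ (a - b)))) ^ 2
      = Real.exp (-(1/2) * ((a - b) ⬝ᵥ (((1/2 : ℝ) • M)⁻¹ *ᵥ (a - b)))) := by
    rw [hq, sq, ← Real.exp_add]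
    congr 1
    ring
  have e5 : ((2 * Real.pi) : ℝ) ^ (-((d:ℝ)/2)) = 2 ^ (-((d:ℝ)/2)) * Real.pi ^ (-((d:ℝ)/2)) :=
    Real.mul_rpow h2.le hπ.le
  have e2 : ((2 : ℝ) ^ d * Real.pi ^ ((d : ℝ) / 2) * M.det ^ ((1 : ℝ) / 2))⁻¹
      = 2 ^ (-(d:ℝ)) * Real.pi ^ (-((d:ℝ)/2)) * M.det ^ (-((1:ℝ)/2)) := by
    rw [← Real.rpow_natCast (2:ℝ) d, mul_inv, mul_inv, ← Real.rpow_neg h2.le,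
      ← Real.rpow_neg hπ.le, ← Real.rpow_neg hD.le]
  have e3 : ((1/2:ℝ))^d = (2:ℝ) ^ (-(d:ℝ)) := by
    rw [← Real.rpow_natCast (1/2:ℝ) d, one_div, ← Real.rpow_neg_one (2:ℝ),
      ← Real.rpow_mul h2.le]
    norm_num
  have e4 : ((2:ℝ) ^ (-(d:ℝ)) * M.det) ^ (-((1:ℝ)/2))
      = 2 ^ ((d:ℝ)/2) * M.det ^ (-((1:ℝ)/2)) := by
    rw [Real.mul_rpow (by positivity) hD.le, ← Real.rpow_mul h2.le,
      show (-(d:ℝ) * -((1:ℝ)/2)) = (d:ℝ)/2 by ring]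
  have hconst : ((2 * Real.pi) ^ (-((d:ℝ)/2)) * M.det ^ (-((1:ℝ)/2))) ^ 2
      = ((2 : ℝ) ^ d * Real.pi ^ ((d : ℝ) / 2) * M.det ^ ((1 : ℝ) / 2))⁻¹
        * ((2 * Real.pi) ^ (-((d:ℝ)/2)) * ((1/2 : ℝ) ^ d * M.det) ^ (-((1:ℝ)/2))) := by
    rw [e5, e2, e3, e4, sq]
    calc (2 ^ (-((d:ℝ)/2)) * Real.pi ^ (-((d:ℝ)/2)) * M.det ^ (-((1:ℝ)/2)))
          * (2 ^ (-((d:ℝ)/2)) * Real.pi ^ (-((d:ℝ)/2)) * M.det ^ (-((1:ℝ)/2)))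
        = ((2:ℝ) ^ (-((d:ℝ)/2)) * 2 ^ (-((d:ℝ)/2))) * (Real.pi ^ (-((d:ℝ)/2)) * Real.pi ^ (-((d:ℝ)/2)))
          * (M.det ^ (-((1:ℝ)/2)) * M.det ^ (-((1:ℝ)/2))) := by ring
      _ = (2:ℝ) ^ (-(d:ℝ)) * Real.pi ^ (-(d:ℝ)) * M.det ^ (-(1:ℝ)) := by
          rw [← Real.rpow_add h2, ← Real.rpow_add hπ, ← Real.rpow_add hD,
            show (-((d:ℝ)/2) + -((d:ℝ)/2)) = -(d:ℝ) by ring,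
            show (-((1:ℝ)/2) + -((1:ℝ)/2)) = -(1:ℝ) by ring]
      _ = ((2:ℝ) ^ (-(d:ℝ)) * 2 ^ (-((d:ℝ)/2)) * 2 ^ ((d:ℝ)/2))
          * (Real.pi ^ (-((d:ℝ)/2)) * Real.pi ^ (-((d:ℝ)/2)))
          * (M.det ^ (-((1:ℝ)/2)) * M.det ^ (-((1:ℝ)/2))) := by
          rw [← Real.rpow_add h2, ← Real.rpow_add h2, ← Real.rpow_add hπ, ← Real.rpow_add hD,
            show (-(d:ℝ) + -((d:ℝ)/2) + (d:ℝ)/2) = -(d:ℝ) by ring,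
            show (-((d:ℝ)/2) + -((d:ℝ)/2)) = -(d:ℝ) by ring,
            show (-((1:ℝ)/2) + -((1:ℝ)/2)) = -(1:ℝ) by ring]
      _ = 2 ^ (-(d:ℝ)) * Real.pi ^ (-((d:ℝ)/2)) * M.det ^ (-((1:ℝ)/2))
          * (2 ^ (-((d:ℝ)/2)) * Real.pi ^ (-((d:ℝ)/2)) * (2 ^ ((d:ℝ)/2) * M.det ^ (-((1:ℝ)/2)))) := by
          ring
  simp only [fN, hdet, neg_div]
  calc ((2 * Real.pi) ^ (-((d:ℝ)/2)) * M.det ^ (-((1:ℝ)/2))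
        * Real.exp (-(1/2) * ((a - b) ⬝ᵥ (M⁻¹ *ᵥ (a - b))))) ^ 2
      = ((2 * Real.pi) ^ (-((d:ℝ)/2)) * M.det ^ (-((1:ℝ)/2))) ^ 2
        * Real.exp (-(1/2) * ((a - b) ⬝ᵥ (M⁻¹ *ᵥ (a - b)))) ^ 2 := by ring
    _ = _ := by rw [hexp, hconst]; ring

/-- Lemma 3.2 of the paper: the expected look-ahead variance of the likelihood.
After a hypothetical observation, the emulator mean `μ_{t+1}(θ) ~ N(μ_t(θ), Φ)` and
the emulator covariance becomes `S_t(θ) − Φ`; averaging the look-ahead variance of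
`p(y|θ)` over the Gaussian law of `μ_{t+1}(θ)` gives the closed form used in EIVAR. -/
theorem lemma_3_2 (d : ℕ) (V St Φ : Matrix (Fin d) (Fin d) ℝ)
    (hV : V.PosDef) (hSt : St.PosDef) (hΦ : Φ.PosDef) (hStΦ : (St - Φ).PosSemidef)
    (hVStΦ : (V + St - Φ).PosDef) (y μt : Fin d → ℝ) :
    (∫ m : Fin d → ℝ,
        (((2 : ℝ) ^ d * Real.pi ^ ((d : ℝ) / 2) * V.det ^ ((1 : ℝ) / 2))⁻¹ *
            fN d ((1 / 2 : ℝ) • V + (St - Φ)) m y -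
          (fN d (V + St - Φ) m y) ^ 2) * fN d Φ μt m) =
      ((2 : ℝ) ^ d * Real.pi ^ ((d : ℝ) / 2) * V.det ^ ((1 : ℝ) / 2))⁻¹ *
          fN d ((1 / 2 : ℝ) • V + St) μt y -
        ((2 : ℝ) ^ d * Real.pi ^ ((d : ℝ) / 2) * (V + St - Φ).det ^ ((1 : ℝ) / 2))⁻¹ *
          fN d ((1 / 2 : ℝ) • (V + St + Φ)) μt y := by
  have hA1 : ((1 / 2 : ℝ) • V + (St - Φ)).PosDef :=
    (posdef_smul hV one_half_pos).add_posSemidef hStΦ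
  have hA2 : ((1 / 2 : ℝ) • (V + St - Φ)).PosDef := posdef_smul hVStΦ one_half_pos
  have key : ∀ m : Fin d → ℝ,
      (((2 : ℝ) ^ d * Real.pi ^ ((d : ℝ) / 2) * V.det ^ ((1 : ℝ) / 2))⁻¹ *
          fN d ((1 / 2 : ℝ) • V + (St - Φ)) m y -
        (fN d (V + St - Φ) m y) ^ 2) * fN d Φ μt m
      = ((2 : ℝ) ^ d * Real.pi ^ ((d : ℝ) / 2) * V.det ^ ((1 : ℝ) / 2))⁻¹ *
          (fN d ((1 / 2 : ℝ) • V + (St - Φ)) m y * fN d Φ μt m)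
        - ((2 : ℝ) ^ d * Real.pi ^ ((d : ℝ) / 2) * (V + St - Φ).det ^ ((1 : ℝ) / 2))⁻¹ *
          (fN d ((1 / 2 : ℝ) • (V + St - Φ)) m y * fN d Φ μt m) := by
    intro m
    rw [fN_sq hVStΦ m y]
    ring
  rw [MeasureTheory.integral_congr_ae (Filter.Eventually.of_forall key),
    MeasureTheory.integral_sub ((fN_conv_integrable hA1 hΦ y μt).const_mul _)
      ((fN_conv_integrable hA2 hΦ y μt).const_mul _),
    MeasureTheory.integral_const_mul, MeasureTheory.integral_const_mul,
    fN_conv hA1 hΦ y μt, fN_conv hA2 hΦ y μt,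
    show (1 / 2 : ℝ) • V + (St - Φ) + Φ = (1 / 2 : ℝ) • V + St by
      rw [add_assoc, sub_add_cancel],
    show (1 / 2 : ℝ) • (V + St - Φ) + Φ = (1 / 2 : ℝ) • (V + St + Φ) by
      rw [show V + St + Φ = (V + St - Φ) + (2 : ℝ) • Φ by rw [two_smul]; abel,
        smul_add, smul_smul]
      norm_num]
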